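/- For each fixed integer m ≥ 1, the limit μ_m = lim_{n→∞} G_{m×n}(1)^{1/(mn)} exists; moreover lim_{m→∞} μ_m = μ, where μ = lim_{m,n→∞} G_{m×n}(1)^{1/(mn)} is the growth constant of the grid. -/

import Mathlib

open scoped Classical

/-- `S` is a dominating set of `G`: every vertex is in `S` or adjacent to a vertex of `S`. -/
def IsDominating {V : Type*} (G : SimpleGraph V) (S : Finset V) : Prop :=
  ∀ v : V, v ∈ S ∨ ∃ u ∈ S, G.Adj u v

/-- The m×n grid graph `P_m □ P_n`. -/
def gridGraph (m n : ℕ) : SimpleGraph (Fin m × Fin n) :=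
  (SimpleGraph.pathGraph m).boxProd (SimpleGraph.pathGraph n)

/-- `G_{m×n}(1)`: the total number of dominating sets of the m×n grid graph. -/
noncomputable def numDomGrid (m n : ℕ) : ℕ :=
  (Finset.univ.filter
    (fun S : Finset (Fin m × Fin n) => IsDominating (gridGraph m n) S)).card

/-- `G_{m×n}(1)^{1/(mn)}`, as a real number. -/
noncomputable def gridGrowth (m n : ℕ) : ℝ :=
  (numDomGrid m n : ℝ) ^ ((1 : ℝ) / (m * n : ℕ))

open Finset

lemma one_le_numDomGrid (m n : ℕ) : 1 ≤ numDomGrid m n := by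
  rw [numDomGrid, Nat.succ_le_iff, Finset.card_pos]
  exact ⟨Finset.univ, by simp [IsDominating]⟩

lemma numDomGrid_le (m n : ℕ) : numDomGrid m n ≤ 2 ^ (m * n) := by
  calc numDomGrid m n ≤ (Finset.univ : Finset (Finset (Fin m × Fin n))).card :=
        Finset.card_filter_le _ _
    _ = 2 ^ (m * n) := by
        simp [Finset.card_univ, Fintype.card_finset, Fintype.card_prod]

section Supermul

variable {m p q : ℕ}

private def e1 (m p q : ℕ) : Fin m × Fin p → Fin m × Fin (p + q) :=
  fun x => (x.1, Fin.castAdd q x.2)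

private def e2 (m p q : ℕ) : Fin m × Fin q → Fin m × Fin (p + q) :=
  fun x => (x.1, Fin.natAdd p x.2)

lemma adj_e1 {a b : Fin m × Fin p} (h : (gridGraph m p).Adj a b) :
    (gridGraph m (p + q)).Adj (e1 m p q a) (e1 m p q b) := by
  rw [gridGraph, SimpleGraph.boxProd_adj] at h ⊢
  rcases h with ⟨h1, h2⟩ | ⟨h1, h2⟩
  · exact Or.inl ⟨h1, by simp [e1, h2]⟩
  · refine Or.inr ⟨?_, h2⟩
    rw [SimpleGraph.pathGraph_adj] at h1 ⊢
    simpa [e1] using h1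

lemma adj_e2 {a b : Fin m × Fin q} (h : (gridGraph m q).Adj a b) :
    (gridGraph m (p + q)).Adj (e2 m p q a) (e2 m p q b) := by
  rw [gridGraph, SimpleGraph.boxProd_adj] at h ⊢
  rcases h with ⟨h1, h2⟩ | ⟨h1, h2⟩
  · exact Or.inl ⟨h1, by simp [e2, h2]⟩
  · refine Or.inr ⟨?_, h2⟩
    rw [SimpleGraph.pathGraph_adj] at h1 ⊢
    simp only [e2, Fin.coe_natAdd]
    omega

lemma dom_union {S : Finset (Fin m × Fin p)} {T : Finset (Fin m × Fin q)}
    (hS : IsDominating (gridGraph m p) S) (hT : IsDominating (gridGraph m q) T) :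
    IsDominating (gridGraph m (p + q)) (S.image (e1 m p q) ∪ T.image (e2 m p q)) := by
  rintro ⟨i, j⟩
  by_cases hj : (j : ℕ) < p
  · have hval : e1 m p q (i, ⟨(j : ℕ), hj⟩) = (i, j) := by
      simp only [e1]
      exact Prod.ext rfl (Fin.ext rfl)
    rcases hS (i, ⟨(j : ℕ), hj⟩) with h | ⟨u, hu, hadj⟩
    · exact Or.inl (mem_union_left _ (hval ▸ mem_image_of_mem _ h))
    · exact Or.inr ⟨e1 m p q u, mem_union_left _ (mem_image_of_mem _ hu),
        hval ▸ adj_e1 hadj⟩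
  · have hj2 : (j : ℕ) - p < q := by omega
    have hval : e2 m p q (i, ⟨(j : ℕ) - p, hj2⟩) = (i, j) := by
      simp only [e2]
      refine Prod.ext rfl (Fin.ext ?_)
      simp only [Fin.coe_natAdd]
      omega
    rcases hT (i, ⟨(j : ℕ) - p, hj2⟩) with h | ⟨u, hu, hadj⟩
    · exact Or.inl (mem_union_right _ (hval ▸ mem_image_of_mem _ h))
    · exact Or.inr ⟨e2 m p q u, mem_union_right _ (mem_image_of_mem _ hu),
        hval ▸ adj_e2 hadj⟩

lemma mem_union_e1 {S : Finset (Fin m × Fin p)} {T : Finset (Fin m × Fin q)}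
    (x : Fin m × Fin p) :
    e1 m p q x ∈ S.image (e1 m p q) ∪ T.image (e2 m p q) ↔ x ∈ S := by
  constructor
  · intro h
    rcases mem_union.1 h with h | h
    · rcases mem_image.1 h with ⟨y, hy, hxy⟩
      simp only [e1] at hxy
      rw [Prod.mk.injEq] at hxy
      have h2 : (y.2 : ℕ) = (x.2 : ℕ) := by
        have := congrArg Fin.val hxy.2
        simpa using this
      have : y = x := Prod.ext hxy.1 (Fin.ext h2)
      exact this ▸ hy
    · rcases mem_image.1 h with ⟨y, _, hxy⟩
      simp only [e1, e2] at hxy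
      rw [Prod.mk.injEq] at hxy
      have := congrArg Fin.val hxy.2
      simp only [Fin.coe_natAdd, Fin.coe_castAdd] at this
      omega
  · intro h
    exact mem_union_left _ (mem_image_of_mem _ h)

lemma mem_union_e2 {S : Finset (Fin m × Fin p)} {T : Finset (Fin m × Fin q)}
    (x : Fin m × Fin q) :
    e2 m p q x ∈ S.image (e1 m p q) ∪ T.image (e2 m p q) ↔ x ∈ T := by
  constructor
  · intro h
    rcases mem_union.1 h with h | h
    · rcases mem_image.1 h with ⟨y, _, hxy⟩
      simp only [e1, e2] at hxy
      rw [Prod.mk.injEq] at hxy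
      have := congrArg Fin.val hxy.2
      simp only [Fin.coe_natAdd, Fin.coe_castAdd] at this
      omega
    · rcases mem_image.1 h with ⟨y, hy, hxy⟩
      simp only [e2] at hxy
      rw [Prod.mk.injEq] at hxy
      have h2 : (y.2 : ℕ) = (x.2 : ℕ) := by
        have := congrArg Fin.val hxy.2
        simp only [Fin.coe_natAdd] at this
        omega
      have : y = x := Prod.ext hxy.1 (Fin.ext h2)
      exact this ▸ hy
  · intro h
    exact mem_union_right _ (mem_image_of_mem _ h)

lemma numDomGrid_supermul (m p q : ℕ) :
    numDomGrid m p * numDomGrid m q ≤ numDomGrid m (p + q) := by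
  classical
  rw [numDomGrid, numDomGrid, numDomGrid, ← Finset.card_product]
  apply Finset.card_le_card_of_injOn
    (fun ST => ST.1.image (e1 m p q) ∪ ST.2.image (e2 m p q))
  · rintro ⟨S, T⟩ hST
    rw [Finset.mem_coe, Finset.mem_product] at hST
    simp only [Finset.mem_coe, Finset.mem_filter, Finset.mem_univ, true_and] at hST ⊢
    exact dom_union hST.1 hST.2
  · rintro ⟨S, T⟩ - ⟨S', T'⟩ - h
    simp only at h
    have hS : S = S' := by
      ext x
      rw [← mem_union_e1 (T := T) x, h, mem_union_e1]
    have hT : T = T' := by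
      ext x
      rw [← mem_union_e2 (S := S) x, h, mem_union_e2]
    rw [hS, hT]

end Supermul

theorem gridGrowth_row_limits (μ : ℝ)
    (hμ : Filter.Tendsto (fun p : ℕ × ℕ => gridGrowth p.1 p.2)
      (Filter.atTop ×ˢ Filter.atTop) (nhds μ)) :
    ∃ μm : ℕ → ℝ,
      (∀ m : ℕ, 1 ≤ m →
        Filter.Tendsto (fun n : ℕ => gridGrowth m n) Filter.atTop (nhds (μm m))) ∧
      Filter.Tendsto μm Filter.atTop (nhds μ) := by
  classical
  set u : ℕ → ℕ → ℝ := fun m n => -Real.log (numDomGrid m n) with hu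
  have hpos : ∀ m n, (0 : ℝ) < (numDomGrid m n : ℝ) := fun m n => by
    exact_mod_cast one_le_numDomGrid m n
  have hsub : ∀ m, Subadditive (u m) := by
    intro m p q
    have hlog : Real.log (numDomGrid m p) + Real.log (numDomGrid m q) ≤
        Real.log (numDomGrid m (p + q)) := by
      rw [← Real.log_mul (hpos m p).ne' (hpos m q).ne']
      apply Real.log_le_log (mul_pos (hpos m p) (hpos m q))
      exact_mod_cast numDomGrid_supermul m p q
    simp only [hu]
    linarith
  have hbdd : ∀ m, BddBelow (Set.range fun n : ℕ => u m n / n) := by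
    intro m
    refine ⟨-(m * Real.log 2), ?_⟩
    rintro x ⟨n, rfl⟩
    show -((m : ℝ) * Real.log 2) ≤ -Real.log (numDomGrid m n) / (n : ℝ)
    rcases Nat.eq_zero_or_pos n with rfl | hn
    · simp only [Nat.cast_zero, div_zero]
      have : (0 : ℝ) ≤ (m : ℝ) * Real.log 2 := by positivity
      linarith
    · rw [neg_div, neg_le_neg_iff, div_le_iff₀ (by exact_mod_cast hn)]
      calc Real.log (numDomGrid m n) ≤ Real.log (2 ^ (m * n)) := by
            apply Real.log_le_log (hpos m n)
            exact_mod_cast numDomGrid_le m n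
        _ = (m * n : ℕ) * Real.log 2 := by
            rw [← Real.rpow_natCast 2 (m * n), Real.log_rpow (by norm_num)]
        _ = (m : ℝ) * Real.log 2 * n := by push_cast; ring
  have key : ∀ m : ℕ, 1 ≤ m → Filter.Tendsto (fun n : ℕ => gridGrowth m n)
      Filter.atTop (nhds (Real.exp (-(hsub m).lim / m))) := by
    intro m hm
    have hT : Filter.Tendsto (fun n => u m n / n) Filter.atTop (nhds (hsub m).lim) :=
      (hsub m).tendsto_lim (hbdd m)
    have hT2 : Filter.Tendsto (fun n : ℕ => Real.exp (-(u m n / n) / m))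
        Filter.atTop (nhds (Real.exp (-(hsub m).lim / m))) :=
      (Real.continuous_exp.tendsto _).comp ((hT.neg).div_const m)
    refine hT2.congr' ?_
    filter_upwards [Filter.eventually_ge_atTop 1] with n hn
    have hmne : (m : ℝ) ≠ 0 := by exact_mod_cast Nat.one_le_iff_ne_zero.1 hm
    have hnne : (n : ℝ) ≠ 0 := by exact_mod_cast Nat.one_le_iff_ne_zero.1 hn
    rw [gridGrowth, Real.rpow_def_of_pos (hpos m n)]
    simp only [hu, neg_neg]
    congr 1
    generalize Real.log ((numDomGrid m n : ℕ) : ℝ) = L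
    push_cast
    ring
  refine ⟨fun m => Real.exp (-(hsub m).lim / m), key, ?_⟩
  rw [Metric.tendsto_atTop]
  intro ε hε
  have hμ' := Metric.tendsto_nhds.1 hμ (ε / 2) (by linarith)
  rw [Filter.prod_atTop_atTop_eq, Filter.eventually_atTop] at hμ'
  obtain ⟨⟨N1, N2⟩, hN⟩ := hμ'
  refine ⟨max (max N1 N2) 1, fun m hm => ?_⟩
  have hm1 : 1 ≤ m := le_trans (le_max_right _ _) hm
  have hdist : dist (Real.exp (-(hsub m).lim / m)) μ ≤ ε / 2 := by
    have hTd : Filter.Tendsto (fun n => dist (gridGrowth m n) μ) Filter.atTop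
        (nhds (dist (Real.exp (-(hsub m).lim / m)) μ)) :=
      (key m hm1).dist tendsto_const_nhds
    refine le_of_tendsto hTd ?_
    filter_upwards [Filter.eventually_ge_atTop (max N1 N2)] with n hn
    exact le_of_lt (hN (m, n) ⟨le_trans (le_trans (le_max_left _ _) (le_max_left _ _)) hm,
      le_trans (le_max_right _ _) hn⟩)
  calc dist (Real.exp (-(hsub m).lim / m)) μ ≤ ε / 2 := hdist
    _ < ε := by linarith
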